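/- Let A_d = ℤ[X,Y,Z]/(X(X+Y+dZ), Y(X+Y+dZ), Y(X+Z), Z²(X+Z), Z²X) graded with X, Y, Z in degree 2, for integers d, d' ≥ 3. Then A_d and A_{d'} are isomorphic as graded rings if and only if d = d'. -/

import Mathlib

open MvPolynomial

/-- The defining ideal of `A_d = ℤ[X,Y,Z]/(X(X+Y+dZ), Y(X+Y+dZ), Y(X+Z), Z²(X+Z), Z²X)`,
with `X = X 0`, `Y = X 1`, `Z = X 2`. -/
noncomputable def idealAd (d : ℤ) : Ideal (MvPolynomial (Fin 3) ℤ) :=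
  Ideal.span {X 0 * (X 0 + X 1 + C d * X 2), X 1 * (X 0 + X 1 + C d * X 2),
    X 1 * (X 0 + X 2), X 2 ^ 2 * (X 0 + X 2), X 2 ^ 2 * X 0}

abbrev R3 := MvPolynomial (Fin 3) ℤ

noncomputable def q1 (d : ℤ) : R3 := X 0 * (X 0 + X 1 + C d * X 2)
noncomputable def q2 (d : ℤ) : R3 := X 1 * (X 0 + X 1 + C d * X 2)
noncomputable def q3 : R3 := X 1 * (X 0 + X 2)

lemma homog_lin (d : ℤ) : (X 0 + X 1 + C d * X 2 : R3).IsHomogeneous 1 :=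
  ((isHomogeneous_X _ _).add (isHomogeneous_X _ _)).add ((isHomogeneous_X _ _).C_mul d)

lemma homog_q1 (d : ℤ) : (q1 d).IsHomogeneous 2 := (isHomogeneous_X _ _).mul (homog_lin d)
lemma homog_q2 (d : ℤ) : (q2 d).IsHomogeneous 2 := (isHomogeneous_X _ _).mul (homog_lin d)
lemma homog_q3 : (q3).IsHomogeneous 2 :=
  (isHomogeneous_X _ _).mul ((isHomogeneous_X _ _).add (isHomogeneous_X _ _))
lemma homog_g4 : (X 2 ^ 2 * (X 0 + X 2) : R3).IsHomogeneous 3 :=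
  ((isHomogeneous_X _ _).pow 2).mul ((isHomogeneous_X _ _).add (isHomogeneous_X _ _))
lemma homog_g5 : (X 2 ^ 2 * X 0 : R3).IsHomogeneous 3 :=
  ((isHomogeneous_X _ _).pow 2).mul (isHomogeneous_X _ _)

lemma hc2_mul_homog (r g : R3) (k : ℕ) (hg : g.IsHomogeneous k) :
    homogeneousComponent 2 (r * g) =
      if k ≤ 2 then homogeneousComponent (2 - k) r * g else 0 := by
  conv_lhs => rw [← sum_homogeneousComponent r, Finset.sum_mul, map_sum]
  have hterm : ∀ i ∈ Finset.range (r.totalDegree + 1),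
      homogeneousComponent 2 (homogeneousComponent i r * g) =
        if 2 = i + k then homogeneousComponent i r * g else 0 := by
    intro i _
    exact homogeneousComponent_of_mem ((homogeneousComponent_isHomogeneous i r).mul hg)
  rw [Finset.sum_congr rfl hterm]
  by_cases hk : k ≤ 2
  · rw [if_pos hk]
    by_cases hin : 2 - k ∈ Finset.range (r.totalDegree + 1)
    · rw [Finset.sum_eq_single (2 - k)]
      · rw [if_pos (by omega)]
      · intro b _ hb
        rw [if_neg (by omega)]
      · intro h
        exact absurd hin h
    · rw [Finset.sum_eq_zero, homogeneousComponent_eq_zero, zero_mul]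
      · simp only [Finset.mem_range, not_lt] at hin
        omega
      · intro i hi
        rw [if_neg]
        simp only [Finset.mem_range] at hi
        intro h
        exact hin (by simpa [Finset.mem_range] using (by omega : 2 - k < r.totalDegree + 1))
  · rw [if_neg hk]
    refine Finset.sum_eq_zero (fun i _ => if_neg (by omega))

lemma mem_span_quad {d : ℤ} {f : R3} (hf : f ∈ idealAd d) :
    ∃ a b c : ℤ, homogeneousComponent 2 f = a • q1 d + b • q2 d + c • q3 := by
  have hrepr : idealAd d = Ideal.span {q1 d, q2 d, q3, X 2 ^ 2 * (X 0 + X 2), X 2 ^ 2 * X 0} := rfl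
  rw [hrepr, Ideal.mem_span_insert] at hf
  obtain ⟨r1, z1, hz1, rfl⟩ := hf
  rw [Ideal.mem_span_insert] at hz1
  obtain ⟨r2, z2, hz2, rfl⟩ := hz1
  rw [Ideal.mem_span_insert] at hz2
  obtain ⟨r3, z3, hz3, rfl⟩ := hz2
  rw [Ideal.mem_span_insert] at hz3
  obtain ⟨r4, z4, hz4, rfl⟩ := hz3
  rw [Ideal.mem_span_singleton'] at hz4
  obtain ⟨r5, rfl⟩ := hz4
  refine ⟨coeff 0 r1, coeff 0 r2, coeff 0 r3, ?_⟩
  rw [map_add, map_add, map_add, map_add]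
  rw [hc2_mul_homog r1 _ 2 (homog_q1 d), hc2_mul_homog r2 _ 2 (homog_q2 d),
    hc2_mul_homog r3 _ 2 homog_q3, hc2_mul_homog r4 _ 3 homog_g4, hc2_mul_homog r5 _ 3 homog_g5]
  norm_num
  ring

lemma degree_single' (j : Fin 3) : (Finsupp.single j 1 : Fin 3 →₀ ℕ).degree = 1 := by
  rw [Finsupp.degree_apply, Finsupp.support_single_ne_zero _ one_ne_zero]
  simp

lemma single_of_degree_one (u : Fin 3 →₀ ℕ) (hu : u.degree = 1) :
    ∃ j, u = Finsupp.single j 1 := by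
  have h : ∑ i : Fin 3, u i = 1 := by
    rw [← hu, Finsupp.degree_apply]
    exact (Finset.sum_subset (Finset.subset_univ _) (by
      intro x _ hx
      simpa using (Finsupp.notMem_support_iff.mp hx))).symm
  rw [Fin.sum_univ_three] at h
  rcases Nat.lt_or_ge (u 0) 1 with h1 | h1
  · rcases Nat.lt_or_ge (u 1) 1 with h2 | h2
    · exact ⟨2, by ext i; fin_cases i <;> simp [Finsupp.single_apply] <;> omega⟩
    · exact ⟨1, by ext i; fin_cases i <;> simp [Finsupp.single_apply] <;> omega⟩
  · exact ⟨0, by ext i; fin_cases i <;> simp [Finsupp.single_apply] <;> omega⟩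

lemma homog_one_eq (p : R3) (hp : p.IsHomogeneous 1) :
    p = ∑ j, (coeff (Finsupp.single j 1) p) • X j := by
  ext u
  rw [coeff_sum]
  by_cases hdeg : u.degree = 1
  · obtain ⟨j, rfl⟩ := single_of_degree_one u hdeg
    rw [Finset.sum_eq_single j]
    · rw [coeff_smul, coeff_X, smul_eq_mul, if_pos rfl, mul_one]
    · intro b _ hb
      rw [coeff_smul, coeff_X',
        if_neg (fun hc => hb ((Finsupp.single_left_inj one_ne_zero).mp hc)), smul_zero]
    · simp
  · rw [hp.coeff_eq_zero hdeg]
    symm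
    refine Finset.sum_eq_zero (fun j _ => ?_)
    rw [coeff_smul, coeff_X', if_neg, smul_zero]
    intro h
    exact hdeg (by rw [← h, degree_single'])

lemma psi_homog (ψ : R3 ≃ₐ[ℤ] R3) (m : Fin 3 → Fin 3 → ℤ)
    (hψ : ∀ i, ψ (X i) = ∑ j, m i j • X j) (p : R3) (k : ℕ) (hp : p.IsHomogeneous k) :
    (ψ p).IsHomogeneous k := by
  have hrw : ψ p = aeval (ψ.toAlgHom ∘ X) p := by
    conv_lhs => rw [show (ψ p) = ψ.toAlgHom p from rfl, aeval_unique ψ.toAlgHom]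
  rw [hrw]
  have := hp.aeval (ψ.toAlgHom ∘ X) (n := 1) (fun i => by
    simp only [Function.comp_apply, AlgEquiv.toAlgHom_eq_coe, AlgHom.coe_coe]
    rw [show (ψ : R3 →ₐ[ℤ] R3) (X i) = ψ (X i) from rfl, hψ i]
    exact IsHomogeneous.sum _ _ _ (fun j _ => by
      rw [smul_eq_C_mul]
      exact (isHomogeneous_X _ _).C_mul _))
  simpa using this

lemma symm_homog_one (ψ : R3 ≃ₐ[ℤ] R3) (m : Fin 3 → Fin 3 → ℤ)
    (hψ : ∀ i, ψ (X i) = ∑ j, m i j • X j) (i : Fin 3) :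
    (ψ.symm (X i)).IsHomogeneous 1 := by
  set p := ψ.symm (X i) with hp
  have hXp : ψ p = X i := ψ.apply_symm_apply _
  have hdec : X i = ∑ k ∈ Finset.range (p.totalDegree + 1), ψ (homogeneousComponent k p) := by
    rw [← hXp]
    conv_lhs => rw [← sum_homogeneousComponent p]
    rw [map_sum]
  have hcomp : X i
      = if 1 ∈ Finset.range (p.totalDegree + 1) then ψ (homogeneousComponent 1 p) else 0 := by
    have h1 : homogeneousComponent 1 (X i : R3) = X i :=
      by rw [homogeneousComponent_of_mem (isHomogeneous_X _ _), if_pos rfl]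
    calc X i = homogeneousComponent 1 (X i) := h1.symm
      _ = ∑ k ∈ Finset.range (p.totalDegree + 1),
            homogeneousComponent 1 (ψ (homogeneousComponent k p)) := by
          rw [← map_sum, ← hdec]
      _ = ∑ k ∈ Finset.range (p.totalDegree + 1),
            if 1 = k then ψ (homogeneousComponent k p) else 0 := by
          refine Finset.sum_congr rfl (fun k _ => ?_)
          exact homogeneousComponent_of_mem
            (psi_homog ψ m hψ _ k (homogeneousComponent_isHomogeneous k p))
      _ = _ := Finset.sum_ite_eq _ _ _
  by_cases hmem : 1 ∈ Finset.range (p.totalDegree + 1)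
  · rw [if_pos hmem] at hcomp
    have : p = homogeneousComponent 1 p := by
      apply ψ.injective
      rw [hXp, hcomp]
    rw [this]
    exact homogeneousComponent_isHomogeneous 1 p
  · rw [if_neg hmem] at hcomp
    exact absurd hcomp (X_ne_zero i)

lemma single_inj_iff (a b : Fin 3) :
    (Finsupp.single a 1 : Fin 3 →₀ ℕ) = Finsupp.single b 1 ↔ a = b :=
  Finsupp.single_left_inj one_ne_zero

lemma prod3_zero {x y z : ℤ} (h : x * y * z = 0) : x = 0 ∨ y = 0 ∨ z = 0 := by
  rcases mul_eq_zero.mp h with h' | h'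
  · rcases mul_eq_zero.mp h' with h'' | h''
    · exact Or.inl h''
    · exact Or.inr (Or.inl h'')
  · exact Or.inr (Or.inr h')

lemma pair_vanish (a2 a3 b2 b3 w2 w3 : ℤ)
    (H : ∀ t : ℤ, (a2 * t + a3) * (b2 * t + b3) * (w2 * t + w3) = 0) :
    (a2 = 0 ∧ a3 = 0) ∨ (b2 = 0 ∧ b3 = 0) ∨ (w2 = 0 ∧ w3 = 0) := by
  have h0 := prod3_zero (H 0)
  have h1 := prod3_zero (H 1)
  have h2 := prod3_zero (H 2)
  have h3 := prod3_zero (H 3)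
  rcases h0 with h|h|h <;> rcases h1 with g|g|g <;> rcases h2 with f|f|f <;>
    rcases h3 with e|e|e <;> omega

lemma factor_lemma (a1 a2 a3 b1 b2 b3 w1 w2 w3 s c1 c2 c3 : ℤ)
    (hs : 0 < s) (hc1 : 0 < c1) (hc2 : 0 < c2) (hc3 : 0 < c3)
    (H : ∀ l1 l2 l3 : ℤ,
      (a1*l1 + a2*l2 + a3*l3) * (b1*l1 + b2*l2 + b3*l3) * (w1*l1 + w2*l2 + w3*l3)
        = s * (l1 * l3 * (c1*l1 + c2*l2 + c3*l3))) :
    (a1*(b2*w3 - b3*w2) - a2*(b1*w3 - b3*w1) + a3*(b1*w2 - b2*w1))^2 = (s*c2)^2 := by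
  have H1 := pair_vanish a2 a3 b2 b3 w2 w3 (fun t => by linear_combination H 0 t 1)
  have H3 := pair_vanish a1 a2 b1 b2 w1 w2 (fun t => by linear_combination H t 1 0)
  rcases H1 with ⟨e1, e2⟩ | ⟨e1, e2⟩ | ⟨e1, e2⟩ <;>
    rcases H3 with ⟨f1, f2⟩ | ⟨f1, f2⟩ | ⟨f1, f2⟩
  · subst e1 e2 f1
    exfalso
    have h := H 1 1 1
    simp only [mul_zero, zero_mul, add_zero, zero_add, mul_one] at h
    nlinarith [h]
  · subst e1 e2 f1 f2
    have key : a1 * b3 * w2 = s * c2 := by linear_combination H 1 1 1 - H 1 0 1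
    linear_combination (a1 * b3 * w2 + s * c2) * key
  · subst e1 e2 f1 f2
    have key : a1 * w3 * b2 = s * c2 := by linear_combination H 1 1 1 - H 1 0 1
    linear_combination (a1 * w3 * b2 + s * c2) * key
  · subst e1 e2 f1 f2
    have key : a3 * b1 * w2 = s * c2 := by linear_combination H 1 1 1 - H 1 0 1
    linear_combination (a3 * b1 * w2 + s * c2) * key
  · subst e1 e2 f1
    exfalso
    have h := H 1 1 1
    simp only [mul_zero, zero_mul, add_zero, zero_add, mul_one] at h
    nlinarith [h]
  · subst e1 e2 f1 f2
    have key : a2 * b1 * w3 = s * c2 := by linear_combination H 1 1 1 - H 1 0 1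
    linear_combination (a2 * b1 * w3 + s * c2) * key
  · subst e1 e2 f1 f2
    have key : a3 * w1 * b2 = s * c2 := by linear_combination H 1 1 1 - H 1 0 1
    linear_combination (a3 * w1 * b2 + s * c2) * key
  · subst e1 e2 f1 f2
    have key : a2 * b3 * w1 = s * c2 := by linear_combination H 1 1 1 - H 1 0 1
    linear_combination (a2 * b3 * w1 + s * c2) * key
  · subst e1 e2 f1
    exfalso
    have h := H 1 1 1
    simp only [mul_zero, zero_mul, add_zero, zero_add, mul_one] at h
    nlinarith [h]

-- The core "one direction" lemma: a linear automorphism carrying `idealAd d` into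
-- `idealAd d'` yields the determinant comparison equation.
open Matrix in
lemma run (d d' : ℤ) (hd : 3 ≤ d) (hd' : 3 ≤ d')
    (ψ : R3 ≃ₐ[ℤ] R3) (m : Fin 3 → Fin 3 → ℤ)
    (hψ : ∀ i, ψ (X i) = ∑ j, m i j • X j)
    (hdm : m 0 0 * (m 1 1 * m 2 2 - m 1 2 * m 2 1) - m 0 1 * (m 1 0 * m 2 2 - m 1 2 * m 2 0)
        + m 0 2 * (m 1 0 * m 2 1 - m 1 1 * m 2 0) ≠ 0)
    (hmap : ∀ f ∈ idealAd d, ψ f ∈ idealAd d') :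
    ∃ e : ℤ, e^2 * (d'*(d'-1))^2
      = (m 0 0 * (m 1 1 * m 2 2 - m 1 2 * m 2 1) - m 0 1 * (m 1 0 * m 2 2 - m 1 2 * m 2 0)
        + m 0 2 * (m 1 0 * m 2 1 - m 1 1 * m 2 0))^4 * (d*(d-1))^2 := by
  set dm := m 0 0 * (m 1 1 * m 2 2 - m 1 2 * m 2 1) - m 0 1 * (m 1 0 * m 2 2 - m 1 2 * m 2 0)
        + m 0 2 * (m 1 0 * m 2 1 - m 1 1 * m 2 0) with hdmdef
  have hC : ∀ r : ℤ, ψ (C r) = C r := fun r => by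
    rw [← MvPolynomial.algebraMap_eq]; exact ψ.commutes r
  -- membership of generators
  have hq1m : q1 d ∈ idealAd d := Ideal.subset_span (by left; rfl)
  have hq2m : q2 d ∈ idealAd d := Ideal.subset_span (by right; left; rfl)
  have hq3m : q3 ∈ idealAd d := Ideal.subset_span (by right; right; left; rfl)
  -- the images are homogeneous quadratics in the span of q1 d', q2 d', q3
  have hself : ∀ p : R3, p.IsHomogeneous 2 → homogeneousComponent 2 p = p := fun p hp => by
    rw [homogeneousComponent_of_mem hp, if_pos rfl]
  obtain ⟨a1, b1, c1, hP1⟩ := mem_span_quad (hmap _ hq1m)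
  rw [hself _ (psi_homog ψ m hψ _ 2 (homog_q1 d))] at hP1
  obtain ⟨a2, b2, c2, hP2⟩ := mem_span_quad (hmap _ hq2m)
  rw [hself _ (psi_homog ψ m hψ _ 2 (homog_q2 d))] at hP2
  obtain ⟨a3, b3, c3, hP3⟩ := mem_span_quad (hmap _ hq3m)
  rw [hself _ (psi_homog ψ m hψ _ 2 homog_q3)] at hP3
  -- scalar evaluation equations
  have E1 : ∀ v0 v1 v2 : ℤ,
      (m 0 0*v0 + m 0 1*v1 + m 0 2*v2) *
        ((m 0 0*v0 + m 0 1*v1 + m 0 2*v2) + (m 1 0*v0 + m 1 1*v1 + m 1 2*v2)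
          + d*(m 2 0*v0 + m 2 1*v1 + m 2 2*v2))
      = a1*(v0*(v0+v1+d'*v2)) + b1*(v1*(v0+v1+d'*v2)) + c1*(v1*(v0+v2)) := by
    intro v0 v1 v2
    have h := congrArg (eval ![v0, v1, v2]) hP1
    rw [q1] at h
    simp only [_root_.map_mul, _root_.map_add, hψ, hC, q1, q2, q3, smul_eq_C_mul] at h
    simp only [eval_mul, eval_add, eval_X, eval_C, Fin.sum_univ_three,
      Matrix.cons_val_zero, Matrix.cons_val_one, Matrix.head_cons, Matrix.cons_val_two,
      Matrix.tail_cons] at h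
    linear_combination h
  have E2 : ∀ v0 v1 v2 : ℤ,
      (m 1 0*v0 + m 1 1*v1 + m 1 2*v2) *
        ((m 0 0*v0 + m 0 1*v1 + m 0 2*v2) + (m 1 0*v0 + m 1 1*v1 + m 1 2*v2)
          + d*(m 2 0*v0 + m 2 1*v1 + m 2 2*v2))
      = a2*(v0*(v0+v1+d'*v2)) + b2*(v1*(v0+v1+d'*v2)) + c2*(v1*(v0+v2)) := by
    intro v0 v1 v2
    have h := congrArg (eval ![v0, v1, v2]) hP2
    rw [q2] at h
    simp only [_root_.map_mul, _root_.map_add, hψ, hC, q1, q2, q3, smul_eq_C_mul] at h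
    simp only [eval_mul, eval_add, eval_X, eval_C, Fin.sum_univ_three,
      Matrix.cons_val_zero, Matrix.cons_val_one, Matrix.head_cons, Matrix.cons_val_two,
      Matrix.tail_cons] at h
    linear_combination h
  have E3 : ∀ v0 v1 v2 : ℤ,
      (m 1 0*v0 + m 1 1*v1 + m 1 2*v2) *
        ((m 0 0*v0 + m 0 1*v1 + m 0 2*v2) + (m 2 0*v0 + m 2 1*v1 + m 2 2*v2))
      = a3*(v0*(v0+v1+d'*v2)) + b3*(v1*(v0+v1+d'*v2)) + c3*(v1*(v0+v2)) := by
    intro v0 v1 v2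
    have h := congrArg (eval ![v0, v1, v2]) hP3
    rw [q3] at h
    simp only [_root_.map_mul, _root_.map_add, hψ, hC, q1, q2, q3, smul_eq_C_mul] at h
    simp only [eval_mul, eval_add, eval_X, eval_C, Fin.sum_univ_three,
      Matrix.cons_val_zero, Matrix.cons_val_one, Matrix.head_cons, Matrix.cons_val_two,
      Matrix.tail_cons] at h
    linear_combination h
  -- the determinant identity
  have F : ∀ l1 l2 l3 : ℤ,
      2*(a1*l1+a2*l2+a3*l3)*(c1*l1+c2*l2+c3*l3)*
        (d'*(a1*l1+a2*l2+a3*l3) + d'*(d'-1)*(b1*l1+b2*l2+b3*l3) + (d'-1)*(c1*l1+c2*l2+c3*l3))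
      = dm^2 * (2*l1*l3*(d*l1 + d*(d-1)*l2 + (d-1)*l3)) := by
    intro l1 l2 l3
    set μ1 := a1*l1+a2*l2+a3*l3 with hμ1
    set μ2 := b1*l1+b2*l2+b3*l3 with hμ2
    set μ3 := c1*l1+c2*l2+c3*l3 with hμ3
    have step1 : (Matrix.of m)ᵀ *
        !![2*l1, l1+l2+l3, d*l1; l1+l2+l3, 2*l2, d*l2+l3; d*l1, d*l2+l3, 0]
        * (Matrix.of m)
        = !![2*μ1, μ1+μ2+μ3, d'*μ1; μ1+μ2+μ3, 2*μ2, d'*μ2+μ3; d'*μ1, d'*μ2+μ3, 0] := by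
      ext i j
      fin_cases i <;> fin_cases j <;>
        simp [Matrix.mul_apply, Fin.sum_univ_three, hμ1, hμ2, hμ3]
      · linear_combination l1*(E1 2 0 0 - 2*(E1 1 0 0)) + l2*(E2 2 0 0 - 2*(E2 1 0 0)) + l3*(E3 2 0 0 - 2*(E3 1 0 0))
      · linear_combination l1*(E1 1 1 0 - E1 1 0 0 - E1 0 1 0) + l2*(E2 1 1 0 - E2 1 0 0 - E2 0 1 0) + l3*(E3 1 1 0 - E3 1 0 0 - E3 0 1 0)
      · linear_combination l1*(E1 1 0 1 - E1 1 0 0 - E1 0 0 1) + l2*(E2 1 0 1 - E2 1 0 0 - E2 0 0 1) + l3*(E3 1 0 1 - E3 1 0 0 - E3 0 0 1)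
      · linear_combination l1*(E1 1 1 0 - E1 1 0 0 - E1 0 1 0) + l2*(E2 1 1 0 - E2 1 0 0 - E2 0 1 0) + l3*(E3 1 1 0 - E3 1 0 0 - E3 0 1 0)
      · linear_combination l1*(E1 0 2 0 - 2*(E1 0 1 0)) + l2*(E2 0 2 0 - 2*(E2 0 1 0)) + l3*(E3 0 2 0 - 2*(E3 0 1 0))
      · linear_combination l1*(E1 0 1 1 - E1 0 1 0 - E1 0 0 1) + l2*(E2 0 1 1 - E2 0 1 0 - E2 0 0 1) + l3*(E3 0 1 1 - E3 0 1 0 - E3 0 0 1)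
      · linear_combination l1*(E1 1 0 1 - E1 1 0 0 - E1 0 0 1) + l2*(E2 1 0 1 - E2 1 0 0 - E2 0 0 1) + l3*(E3 1 0 1 - E3 1 0 0 - E3 0 0 1)
      · linear_combination l1*(E1 0 1 1 - E1 0 1 0 - E1 0 0 1) + l2*(E2 0 1 1 - E2 0 1 0 - E2 0 0 1) + l3*(E3 0 1 1 - E3 0 1 0 - E3 0 0 1)
      · linear_combination l1*(E1 0 0 2 - 2*(E1 0 0 1)) + l2*(E2 0 0 2 - 2*(E2 0 0 1)) + l3*(E3 0 0 2 - 2*(E3 0 0 1))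
    have hdet := congrArg Matrix.det step1
    rw [Matrix.det_mul, Matrix.det_mul, Matrix.det_transpose] at hdet
    simp [Matrix.det_fin_three] at hdet
    linear_combination -hdet
  -- cancel the 2 and apply the factorization lemma
  have H : ∀ l1 l2 l3 : ℤ,
      (a1*l1 + a2*l2 + a3*l3) * (c1*l1 + c2*l2 + c3*l3) *
        ((d'*a1 + d'*(d'-1)*b1 + (d'-1)*c1)*l1 + (d'*a2 + d'*(d'-1)*b2 + (d'-1)*c2)*l2
          + (d'*a3 + d'*(d'-1)*b3 + (d'-1)*c3)*l3)
      = dm^2 * (l1 * l3 * (d*l1 + (d*(d-1))*l2 + (d-1)*l3)) := by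
    intro l1 l2 l3
    have h2 : (2:ℤ) * ((a1*l1 + a2*l2 + a3*l3) * (c1*l1 + c2*l2 + c3*l3) *
        ((d'*a1 + d'*(d'-1)*b1 + (d'-1)*c1)*l1 + (d'*a2 + d'*(d'-1)*b2 + (d'-1)*c2)*l2
          + (d'*a3 + d'*(d'-1)*b3 + (d'-1)*c3)*l3))
        = 2 * (dm^2 * (l1 * l3 * (d*l1 + (d*(d-1))*l2 + (d-1)*l3))) := by
      linear_combination F l1 l2 l3
    exact mul_left_cancel₀ two_ne_zero h2
  have hs : 0 < dm^2 := by positivity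
  have res := factor_lemma a1 a2 a3 c1 c2 c3
    (d'*a1 + d'*(d'-1)*b1 + (d'-1)*c1) (d'*a2 + d'*(d'-1)*b2 + (d'-1)*c2)
    (d'*a3 + d'*(d'-1)*b3 + (d'-1)*c3) (dm^2) d (d*(d-1)) (d-1)
    hs (by linarith) (by nlinarith) (by linarith) H
  -- identify the determinant of the factor triple
  refine ⟨a1*(b2*c3 - b3*c2) - a2*(b1*c3 - b3*c1) + a3*(b1*c2 - b2*c1), ?_⟩
  linear_combination res

theorem stmt_14 (d d' : ℤ) (hd : 3 ≤ d) (hd' : 3 ≤ d') :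
    (∃ ψ : MvPolynomial (Fin 3) ℤ ≃ₐ[ℤ] MvPolynomial (Fin 3) ℤ,
      (∀ i : Fin 3, ∃ c : Fin 3 → ℤ, ψ (X i) = ∑ j, c j • X j) ∧
      Ideal.map ψ.toAlgHom.toRingHom (idealAd d) = idealAd d') ↔ d = d' := by
  constructor
  · rintro ⟨ψ, hlin, hmapEq⟩
    choose m hm using hlin
    -- the inverse is also linear
    set n : Fin 3 → Fin 3 → ℤ := fun i j => coeff (Finsupp.single j 1) (ψ.symm (X i)) with hndef
    have hn : ∀ i, ψ.symm (X i) = ∑ j, n i j • X j := fun i =>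
      homog_one_eq _ (symm_homog_one ψ m hm i)
    -- N * M = 1
    have key : ∀ i k : Fin 3, (∑ j, n i j * m j k) = if i = k then 1 else 0 := by
      intro i k
      have h := ψ.apply_symm_apply (X i)
      rw [hn i, map_sum] at h
      simp only [_root_.map_smul, hm] at h
      have h2 := congrArg (coeff (Finsupp.single k 1)) h
      simp only [coeff_sum, coeff_smul, coeff_X', single_inj_iff, smul_eq_mul,
        Finset.mul_sum, mul_ite, mul_one, mul_zero, Finset.sum_ite_eq', Finset.mem_univ,
        if_true] at h2
      exact h2
    have hMat : (Matrix.of n) * (Matrix.of m) = 1 := by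
      ext i k
      rw [Matrix.mul_apply]
      simp only [Matrix.of_apply, Matrix.one_apply]
      exact key i k
    have hdd : (Matrix.of n).det * (Matrix.of m).det = 1 := by
      rw [← Matrix.det_mul, hMat, Matrix.det_one]
    set dm := m 0 0 * (m 1 1 * m 2 2 - m 1 2 * m 2 1) - m 0 1 * (m 1 0 * m 2 2 - m 1 2 * m 2 0)
        + m 0 2 * (m 1 0 * m 2 1 - m 1 1 * m 2 0) with hdmdef
    set dn := n 0 0 * (n 1 1 * n 2 2 - n 1 2 * n 2 1) - n 0 1 * (n 1 0 * n 2 2 - n 1 2 * n 2 0)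
        + n 0 2 * (n 1 0 * n 2 1 - n 1 1 * n 2 0) with hdndef
    have hdm_eq : (Matrix.of m).det = dm := by
      rw [Matrix.det_fin_three]; simp only [Matrix.of_apply]; ring
    have hdn_eq : (Matrix.of n).det = dn := by
      rw [Matrix.det_fin_three]; simp only [Matrix.of_apply]; ring
    rw [hdm_eq, hdn_eq] at hdd
    have hdm0 : dm ≠ 0 := fun h => by rw [h, mul_zero] at hdd; exact one_ne_zero hdd.symm
    have hdn0 : dn ≠ 0 := fun h => by rw [h, zero_mul] at hdd; exact one_ne_zero hdd.symm
    -- the two ideal inclusions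
    have hmap1 : ∀ f ∈ idealAd d, ψ f ∈ idealAd d' := by
      intro f hf
      rw [← hmapEq]
      exact Ideal.mem_map_of_mem _ hf
    have hmapEq2 : Ideal.map ψ.symm.toAlgHom.toRingHom (idealAd d') = idealAd d := by
      rw [← hmapEq, Ideal.map_map]
      have hcomp : ψ.symm.toAlgHom.toRingHom.comp ψ.toAlgHom.toRingHom
          = RingHom.id (MvPolynomial (Fin 3) ℤ) :=
        RingHom.ext (fun x => ψ.symm_apply_apply x)
      rw [hcomp, Ideal.map_id]
    have hmap2 : ∀ f ∈ idealAd d', ψ.symm f ∈ idealAd d := by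
      intro f hf
      rw [← hmapEq2]
      exact Ideal.mem_map_of_mem _ hf
    obtain ⟨e, he⟩ := run d d' hd hd' ψ m hm hdm0 hmap1
    obtain ⟨f, hf⟩ := run d' d hd' hd ψ.symm n hn hdn0 hmap2
    rw [← hdmdef] at he
    rw [← hdndef] at hf
    clear_value dm dn
    clear hmapEq hMat key hn hm hmap1 hmap2 hmapEq2 hdm_eq hdn_eq hdm0 hdn0 hndef hdmdef hdndef
    clear ψ n m
    -- arithmetic endgame
    have h4 : dn^4 * dm^4 = 1 := by
      calc dn^4 * dm^4 = (dn * dm)^4 := by ring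
        _ = 1 := by rw [hdd]; norm_num
    have hD6 : (6:ℤ) ≤ d*(d-1) := by nlinarith
    have hD'6 : (6:ℤ) ≤ d'*(d'-1) := by nlinarith
    have h1 : (e*f)^2 * ((d*(d-1))*(d'*(d'-1)))^2 = ((d*(d-1))*(d'*(d'-1)))^2 := by
      linear_combination (f^2*(d*(d-1))^2)*he + (dm^4*(d*(d-1))^2)*hf
        + ((d*(d-1))^2*(d'*(d'-1))^2)*h4
    have hDD0 : (((d*(d-1))*(d'*(d'-1))))^2 ≠ 0 := by positivity
    have h5 : (e*f)^2 = 1 :=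
      mul_right_cancel₀ hDD0 (by linear_combination h1)
    have he2 : e^2 = 1 := by
      have h6 : e^2 * f^2 = 1 := by linear_combination h5
      exact Int.eq_one_of_mul_eq_one_right (sq_nonneg e) h6
    have hdm4 : dm^4 = 1 := by
      rcases Int.isUnit_iff.mp (IsUnit.of_mul_eq_one (a := dm) dn (by linear_combination hdd)) with h | h <;>
        rw [h] <;> norm_num
    have hsq : (d'*(d'-1))^2 = (d*(d-1))^2 := by
      rw [hdm4] at he
      linear_combination he - (d'*(d'-1))^2 * he2
    have hDeq : d*(d-1) = d'*(d'-1) := by nlinarith [hsq, hD6, hD'6]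
    nlinarith [hDeq, hd, hd']
  · rintro rfl
    refine ⟨AlgEquiv.refl, fun i => ⟨fun j => if j = i then 1 else 0, ?_⟩, ?_⟩
    · simp [Finset.sum_ite_eq', ite_smul]
    · have : (AlgEquiv.refl : MvPolynomial (Fin 3) ℤ ≃ₐ[ℤ] _).toAlgHom.toRingHom
          = RingHom.id _ := rfl
      rw [this, Ideal.map_id]
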